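/- A connected full conjunctive query Q is hierarchical if and only if there exists a q-tree for Q, i.e., a labeled tree τ: t → I(Q) ∪ vars(Q) such that every variable of Q labels exactly one inner node, every atom identifier labels exactly one leaf, and for each leaf labeled by atom i, the set of variable labels on the inner nodes of the root-to-leaf path equals exactly the set of variables of atom i. -/

import Mathlib

/-- `u` is a leaf of the tree `t` (a prefix-closed finite set of `ℕ`-strings):
its only descendant in `t` is itself. -/
def IsLeafIn (t : Finset (List ℕ)) (u : List ℕ) : Prop :=
  ∀ v ∈ t, u <+: v → v = u

/-- A q-tree for a CQ with atoms `0, …, m-1` whose variable sets are given by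
`vars`: a finite prefix-closed tree of `ℕ`-strings with a labeling by atom
identifiers and variables, such that every variable labels exactly one inner
node, every atom identifier labels exactly one leaf, and for every leaf
labeled by atom `i`, the variables labeling the proper ancestors (the inner
nodes of the root-to-leaf path) are exactly the variables of atom `i`. -/
structure QTreeFor {m : ℕ} {V : Type*} (vars : Fin m → Finset V) where
  t : Finset (List ℕ)
  root_mem : [] ∈ t
  prefix_closed : ∀ u ∈ t, ∀ v : List ℕ, v <+: u → v ∈ t
  label : List ℕ → Fin m ⊕ V
  var_unique : ∀ x : V, ∃! u, u ∈ t ∧ ¬ IsLeafIn t u ∧ label u = Sum.inr x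
  atom_unique : ∀ i : Fin m, ∃! u, u ∈ t ∧ IsLeafIn t u ∧ label u = Sum.inl i
  path_vars : ∀ u ∈ t, ∀ i : Fin m, IsLeafIn t u → label u = Sum.inl i →
      ∀ x : V, x ∈ vars i ↔ ∃ v ∈ t, v ≠ u ∧ v <+: u ∧ label v = Sum.inr x

/-- A CQ (given by the variable sets of its atoms) is hierarchical iff for all
variables `x, y`, the sets of atoms containing them are comparable or
disjoint. -/
def Hierarchical {m : ℕ} {V : Type*} (vars : Fin m → Finset V) : Prop :=
  ∀ x y : V,
    {i : Fin m | x ∈ vars i} ⊆ {i : Fin m | y ∈ vars i} ∨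
    {i : Fin m | y ∈ vars i} ⊆ {i : Fin m | x ∈ vars i} ∨
    {i : Fin m | x ∈ vars i} ∩ {i : Fin m | y ∈ vars i} = ∅


section ListLemmas

lemma filter_le_prefix' (c : ℕ) :
    ∀ (l : List ℕ), l.Pairwise (· < ·) →
      l.filter (fun a => a ≤ c) <+: l := by
  intro l
  induction l with
  | nil => simp
  | cons a l ih =>
    intro h
    rw [List.pairwise_cons] at h
    by_cases hac : a ≤ c
    · rw [List.filter_cons_of_pos (by simpa using hac)]
      exact (List.cons_prefix_cons).2 ⟨rfl, ih h.2⟩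
    · rw [List.filter_cons_of_neg (by simpa using hac)]
      have : l.filter (fun a => a ≤ c) = [] := by
        rw [List.filter_eq_nil_iff]
        intro b hb
        simp only [decide_eq_true_eq]
        have := h.1 b hb
        omega
      rw [this]
      exact List.nil_prefix

lemma prefix_eq_filter' :
    ∀ (l p : List ℕ), l.Pairwise (· < ·) → p <+: l →
      ∀ x, p.getLast? = some x → p = l.filter (fun a => a ≤ x) := by
  intro l
  induction l with
  | nil =>
    intro p _ hp x hx
    rw [List.prefix_nil] at hp; subst hp; simp at hx
  | cons a l ih =>
    intro p hpw hp x hx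
    rw [List.pairwise_cons] at hpw
    rcases p with _ | ⟨b, p'⟩
    · simp at hx
    · rw [List.cons_prefix_cons] at hp
      obtain ⟨rfl, hp'⟩ := hp
      rcases p' with _ | ⟨c, p''⟩
      · have hbx : b = x := by simpa using hx
        subst hbx
        rw [List.filter_cons_of_pos (by simp)]
        have h0 : l.filter (fun a => a ≤ b) = [] := by
          rw [List.filter_eq_nil_iff]
          intro y hy
          simp only [decide_eq_true_eq]
          have := hpw.1 y hy
          omega
        rw [h0]
      · have hx' : (c :: p'').getLast? = some x := by
          rwa [List.getLast?_cons_cons] at hx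
        have hxl : x ∈ l := hp'.subset (List.mem_of_mem_getLast? hx')
        have hax : b ≤ x := le_of_lt (hpw.1 x hxl)
        rw [List.filter_cons_of_pos (by simpa using hax)]
        rw [ih (c :: p'') hpw.2 hp' x hx']

lemma getLast?_filter_le' :
    ∀ (l : List ℕ), l.Pairwise (· < ·) → ∀ c ∈ l,
      (l.filter (fun a => a ≤ c)).getLast? = some c := by
  intro l
  induction l with
  | nil => simp
  | cons a l ih =>
    intro h c hc
    rw [List.pairwise_cons] at h
    rcases List.mem_cons.1 hc with rfl | hcl
    · rw [List.filter_cons_of_pos (by simp)]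
      have : l.filter (fun a => a ≤ c) = [] := by
        rw [List.filter_eq_nil_iff]
        intro b hb
        simp only [decide_eq_true_eq]
        have := h.1 b hb
        omega
      rw [this]; simp
    · have hac : a ≤ c := le_of_lt (h.1 c hcl)
      rw [List.filter_cons_of_pos (by simpa using hac)]
      have ihc := ih h.2 c hcl
      rcases e : l.filter (fun a => a ≤ c) with _ | ⟨d, t⟩
      · rw [e] at ihc; simp at ihc
      · rw [e] at ihc
        rw [List.getLast?_cons_cons]
        exact ihc

end ListLemmas

section Constr

variable {m : ℕ} {V : Type*} (vars : Fin m → Finset V) (κ : V → ℕ)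

/-- sorted list of doubled κ-values of variables of atom `i` -/
private noncomputable def mpart [DecidableEq V] (i : Fin m) : List ℕ :=
  Finset.sort ((vars i).image fun x => 2 * κ x) (· ≤ ·)

private noncomputable def ell [DecidableEq V] (i : Fin m) : List ℕ :=
  mpart vars κ i ++ [2 * (i : ℕ) + 1]

private noncomputable def qt [DecidableEq V] : Finset (List ℕ) :=
  Finset.univ.biUnion fun i => (ell vars κ i).inits.toFinset

open Classical in
private noncomputable def qlabel (hm : 0 < m) (u : List ℕ) : Fin m ⊕ V :=
  if h : ∃ x : V, u.getLast? = some (2 * κ x) then Sum.inr h.choose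
  else if h2 : ∃ i : Fin m, u.getLast? = some (2 * (i : ℕ) + 1) then Sum.inl h2.choose
  else Sum.inl ⟨0, hm⟩

variable [DecidableEq V]

private lemma mem_mpart {n : ℕ} {i : Fin m} :
    n ∈ mpart vars κ i ↔ ∃ x ∈ vars i, 2 * κ x = n := by
  simp [mpart, Finset.mem_sort, Finset.mem_image]

private lemma mpart_sorted (i : Fin m) : (mpart vars κ i).Pairwise (· < ·) :=
  (Finset.sortedLT_sort _).pairwise

private lemma mpart_nodup (i : Fin m) : (mpart vars κ i).Nodup :=
  Finset.sort_nodup _ _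

private lemma mem_qt {u : List ℕ} : u ∈ qt vars κ ↔ ∃ i, u <+: ell vars κ i := by
  simp [qt, List.mem_inits]

private lemma ell_last (i : Fin m) :
    (ell vars κ i).getLast? = some (2 * (i : ℕ) + 1) := by
  simp [ell]

private lemma qlabel_last_of_inr {hm : 0 < m} {u : List ℕ} {x : V}
    (h : qlabel κ hm u = Sum.inr x) : u.getLast? = some (2 * κ x) := by
  unfold qlabel at h
  split_ifs at h with h1 h2
  · have hs := h1.choose_spec
    have : h1.choose = x := Sum.inr.inj h
    rwa [this] at hs
  all_goals exact absurd h (by simp)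

private lemma qlabel_inr_of_last (hinj : Function.Injective κ) {hm : 0 < m}
    {u : List ℕ} {x : V} (h : u.getLast? = some (2 * κ x)) :
    qlabel κ hm u = Sum.inr x := by
  unfold qlabel
  have hex : ∃ y : V, u.getLast? = some (2 * κ y) := ⟨x, h⟩
  rw [dif_pos hex]
  have hs := h.symm.trans hex.choose_spec
  have h2 : κ x = κ hex.choose := by
    have := Option.some.inj hs
    omega
  exact congrArg Sum.inr (hinj h2).symm

private lemma qlabel_inl_of_last {hm : 0 < m} {u : List ℕ} {i : Fin m}
    (h : u.getLast? = some (2 * (i : ℕ) + 1)) :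
    qlabel (V := V) κ hm u = Sum.inl i := by
  unfold qlabel
  rw [dif_neg, dif_pos ⟨i, h⟩]
  · have hs := h.symm.trans (⟨i, h⟩ : ∃ j : Fin m, u.getLast? = some (2 * (j : ℕ) + 1)).choose_spec
    have h2 := Option.some.inj hs
    exact congrArg Sum.inl (Fin.ext (by omega))
  · rintro ⟨y, hy⟩
    rw [h] at hy
    have := Option.some.inj hy
    omega

end Constr

set_option linter.unusedSectionVars false
set_option linter.unreachableTactic false
set_option linter.unusedTactic false

section Main

private lemma exists_qtree {m : ℕ} {V : Type*} [DecidableEq V]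
    (vars : Fin m → Finset V) (κ : V → ℕ) (hm : 0 < m)
    (hV : ∀ x : V, ∃ i, x ∈ vars i)
    (hinj : Function.Injective κ)
    (hmono : ∀ x y : V, {j : Fin m | x ∈ vars j} ⊂ {j : Fin m | y ∈ vars j} → κ y < κ x)
    (hcmp : ∀ (x y : V) (i : Fin m), x ∈ vars i → y ∈ vars i →
      {j : Fin m | x ∈ vars j} ⊆ {j : Fin m | y ∈ vars j} ∨
      {j : Fin m | y ∈ vars j} ⊆ {j : Fin m | x ∈ vars j}) :
    Nonempty (QTreeFor vars) := by
  classical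
  haveI : IsAntisymm ℕ (· < ·) := ⟨fun a b h1 h2 => absurd h2 (lt_asymm h1)⟩
  -- comparability consequence
  have h4 : ∀ (x y : V) (i : Fin m), x ∈ vars i → y ∈ vars i → κ y ≤ κ x →
      {j : Fin m | x ∈ vars j} ⊆ {j : Fin m | y ∈ vars j} := by
    intro x y i hx hy hk
    rcases hcmp x y i hx hy with h | h
    · exact h
    · by_cases he : {j : Fin m | y ∈ vars j} = {j : Fin m | x ∈ vars j}
      · exact he.ge
      · have hss : {j : Fin m | y ∈ vars j} ⊂ {j : Fin m | x ∈ vars j} := ⟨h, fun hc => he (subset_antisymm h hc)⟩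
        have := hmono y x hss
        omega
  have h5 : ∀ (x y : V) (i j : Fin m), x ∈ vars i → y ∈ vars i → κ y ≤ κ x →
      x ∈ vars j → y ∈ vars j := by
    intro x y i j hx hy hk hxj
    exact h4 x y i hx hy hk hxj
  -- membership of doubled values gives variables
  have hMem : ∀ (n : ℕ) (i : Fin m) (x : V), n ∈ mpart vars κ i → n = 2 * κ x → x ∈ vars i := by
    intro n i x hn he
    rw [mem_mpart] at hn
    obtain ⟨y, hy, hy2⟩ := hn
    have : y = x := hinj (by omega)
    rwa [this] at hy
  -- uniqueness of variable nodes
  have hU : ∀ (x : V) (u v : List ℕ) (i j : Fin m), u <+: mpart vars κ i → v <+: mpart vars κ j →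
      u.getLast? = some (2 * κ x) → v.getLast? = some (2 * κ x) → u = v := by
    intro x u v i j hui hvj hu hv
    have hxi : x ∈ vars i := hMem _ i x (hui.subset (List.mem_of_mem_getLast? hu)) rfl
    have hxj : x ∈ vars j := hMem _ j x (hvj.subset (List.mem_of_mem_getLast? hv)) rfl
    have hu' := prefix_eq_filter' (mpart vars κ i) u (mpart_sorted vars κ i) hui _ hu
    have hv' := prefix_eq_filter' (mpart vars κ j) v (mpart_sorted vars κ j) hvj _ hv
    rw [hu', hv']
    refine (fun h a b => List.Perm.eq_of_pairwise' (r := (· < ·)) a b h) ?_ ?_ ?_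
    · rw [List.perm_ext_iff_of_nodup (List.filter_sublist.nodup (mpart_nodup vars κ i))
        (List.filter_sublist.nodup (mpart_nodup vars κ j))]
      intro n
      simp only [List.mem_filter, decide_eq_true_eq, mem_mpart]
      constructor
      · rintro ⟨⟨y, hy, rfl⟩, hle⟩
        exact ⟨⟨y, h5 x y i j hxi hy (by omega) hxj, rfl⟩, hle⟩
      · rintro ⟨⟨y, hy, rfl⟩, hle⟩
        exact ⟨⟨y, h5 x y j i hxj hy (by omega) hxi, rfl⟩, hle⟩
    · exact ((mpart_sorted vars κ i).sublist List.filter_sublist)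
    · exact ((mpart_sorted vars κ j).sublist List.filter_sublist)
  -- a prefix of ell with even last is a prefix of mpart
  have hEven : ∀ (u : List ℕ) (i : Fin m) (x : V), u <+: ell vars κ i →
      u.getLast? = some (2 * κ x) → u <+: mpart vars κ i := by
    intro u i x hu hl
    have hu2 : u <+: mpart vars κ i ++ [2 * (i : ℕ) + 1] := hu
    rcases List.prefix_concat_iff.1 hu2 with h | h
    · exfalso
      have : u.getLast? = some (2 * (i : ℕ) + 1) := by rw [h]; simp
      rw [hl] at this
      have := Option.some.inj this
      omega
    · exact h
  -- node existence
  have hNode : ∀ (x : V) (i : Fin m), x ∈ vars i →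
      ∃ u : List ℕ, u <+: mpart vars κ i ∧ u.getLast? = some (2 * κ x) := by
    intro x i hx
    refine ⟨(mpart vars κ i).filter (fun a => a ≤ 2 * κ x),
      filter_le_prefix' _ _ (mpart_sorted vars κ i),
      getLast?_filter_le' _ (mpart_sorted vars κ i) _ ?_⟩
    exact (mem_mpart vars κ).2 ⟨x, hx, rfl⟩
  have hEllMem : ∀ i : Fin m, ell vars κ i ∈ qt vars κ :=
    fun i => (mem_qt vars κ).2 ⟨i, List.prefix_refl _⟩
  -- ell prefixes
  have hP1 : ∀ i j : Fin m, ell vars κ i <+: ell vars κ j → ell vars κ i = ell vars κ j := by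
    intro i j h
    have h2 : ell vars κ i <+: mpart vars κ j ++ [2 * (j : ℕ) + 1] := h
    rcases List.prefix_concat_iff.1 h2 with h' | h'
    · exact h'
    · exfalso
      have hmem : 2 * (i : ℕ) + 1 ∈ ell vars κ i := by
        unfold ell; simp
      have := (mem_mpart vars κ).1 (h'.subset hmem)
      obtain ⟨y, _, hy⟩ := this
      omega
  have hLeaf : ∀ i : Fin m, IsLeafIn (qt vars κ) (ell vars κ i) := by
    intro i v hv hpre
    obtain ⟨j, hj⟩ := (mem_qt vars κ).1 hv
    have h1 : ell vars κ i <+: ell vars κ j := hpre.trans hj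
    have h2 : v <+: ell vars κ i := (hP1 i j h1) ▸ hj
    exact h2.sublist.antisymm hpre.sublist
  have hLeavesEq : ∀ u ∈ qt vars κ, IsLeafIn (qt vars κ) u → ∃ i, u = ell vars κ i := by
    intro u hu hl
    obtain ⟨i, hi⟩ := (mem_qt vars κ).1 hu
    exact ⟨i, (hl _ (hEllMem i) hi).symm⟩
  have hNotLeaf : ∀ (u : List ℕ) (i : Fin m), u <+: ell vars κ i → u ≠ ell vars κ i →
      ¬ IsLeafIn (qt vars κ) u := by
    intro u i hpre hne hl
    exact hne (hl _ (hEllMem i) hpre).symm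
  have hMne : ∀ (u : List ℕ) (i : Fin m) (x : V), u.getLast? = some (2 * κ x) →
      u ≠ ell vars κ i := by
    intro u i x hu he
    rw [he, ell_last] at hu
    have := Option.some.inj hu
    omega
  -- assemble
  refine ⟨⟨qt vars κ, ?_, ?_, qlabel κ hm, ?_, ?_, ?_⟩⟩
  · exact (mem_qt vars κ).2 ⟨⟨0, hm⟩, List.nil_prefix⟩
  · intro u hu v hv
    obtain ⟨i, hi⟩ := (mem_qt vars κ).1 hu
    exact (mem_qt vars κ).2 ⟨i, hv.trans hi⟩
  · -- var_unique
    intro x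
    obtain ⟨i, hxi⟩ := hV x
    obtain ⟨u, hupre, hulast⟩ := hNode x i hxi
    have huell : u <+: ell vars κ i := hupre.trans (List.prefix_append _ _)
    refine ⟨u, ⟨(mem_qt vars κ).2 ⟨i, huell⟩, hNotLeaf u i huell (hMne u i x hulast),
      qlabel_inr_of_last κ hinj hulast⟩, ?_⟩
    rintro v ⟨hv, hvnl, hvlab⟩
    obtain ⟨j, hvj⟩ := (mem_qt vars κ).1 hv
    have hvlast : v.getLast? = some (2 * κ x) := qlabel_last_of_inr κ hvlab
    have hvm : v <+: mpart vars κ j := hEven v j x hvj hvlast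
    exact hU x v u j i hvm hupre hvlast hulast
  · -- atom_unique
    intro i
    refine ⟨ell vars κ i, ⟨hEllMem i, hLeaf i, qlabel_inl_of_last κ (ell_last vars κ i)⟩, ?_⟩
    rintro v ⟨hv, hlv, hlab⟩
    obtain ⟨j, rfl⟩ := hLeavesEq v hv hlv
    have h2 : qlabel (V := V) κ hm (ell vars κ j) = Sum.inl j :=
      qlabel_inl_of_last κ (ell_last vars κ j)
    rw [h2] at hlab
    rw [Sum.inl.inj hlab]
  · -- path_vars
    intro u hu i hlf hlab x
    obtain ⟨j, rfl⟩ := hLeavesEq u hu hlf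
    have h2 : qlabel (V := V) κ hm (ell vars κ j) = Sum.inl j :=
      qlabel_inl_of_last κ (ell_last vars κ j)
    rw [h2] at hlab
    have hji : j = i := Sum.inl.inj hlab
    subst hji
    constructor
    · intro hxi
      obtain ⟨v, hvpre, hvlast⟩ := hNode x j hxi
      exact ⟨v, (mem_qt vars κ).2 ⟨j, hvpre.trans (List.prefix_append _ _)⟩,
        hMne v j x hvlast, hvpre.trans (List.prefix_append _ _),
        qlabel_inr_of_last κ hinj hvlast⟩
    · rintro ⟨v, hv, hvne, hvpre, hvlab⟩
      have hvlast : v.getLast? = some (2 * κ x) := qlabel_last_of_inr κ hvlab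
      have hvm : v <+: mpart vars κ j := hEven v j x hvpre hvlast
      exact hMem _ j x (hvm.subset (List.mem_of_mem_getLast? hvlast)) rfl


/-- A connected full CQ (every variable of type `V` occurs in
some atom, and some variable occurs in every atom) is hierarchical if and only
if it has a q-tree. -/
theorem hierarchical_iff_qtree {m : ℕ} {V : Type*}
    (vars : Fin m → Finset V)
    (hconn : ∃ x : V, ∀ i, x ∈ vars i)
    (hV : ∀ x : V, ∃ i, x ∈ vars i) :
    Hierarchical vars ↔ Nonempty (QTreeFor vars) := by
  classical
  obtain ⟨x₀, hx₀⟩ := hconn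
  obtain ⟨i₀, -⟩ := hV x₀
  have hm : 0 < m := i₀.pos
  constructor
  · intro H
    have hfin : Finite V := by
      have h1 : (Set.univ : Set V).Finite := by
        have h2 : (Set.univ : Set V) ⊆ ⋃ i, (vars i : Set V) := fun x _ => by
          obtain ⟨i, hi⟩ := hV x
          exact Set.mem_iUnion.2 ⟨i, hi⟩
        exact (Set.finite_iUnion fun i => (vars i).finite_toSet).subset h2
      exact Set.finite_univ_iff.mp h1
    cases nonempty_fintype V
    have hC0 : 0 < Fintype.card V := Fintype.card_pos_iff.mpr ⟨x₀⟩
    set C := Fintype.card V with hC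
    let e := Fintype.equivFin V
    let κ : V → ℕ := fun x => C * (m - ({j : Fin m | x ∈ vars j}).ncard) + (e x : ℕ)
    have hinj : Function.Injective κ := by
      intro a b hab
      have ha : (e a : ℕ) < C := (e a).isLt
      have hb : (e b : ℕ) < C := (e b).isLt
      have h1 : κ a % C = κ b % C := by rw [hab]
      simp only [κ, Nat.mul_add_mod] at h1
      rw [Nat.mod_eq_of_lt ha, Nat.mod_eq_of_lt hb] at h1
      exact e.injective (Fin.ext h1)
    have hmono : ∀ x y : V, {j : Fin m | x ∈ vars j} ⊂ {j : Fin m | y ∈ vars j} → κ y < κ x := by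
      intro x y hxy
      have h1 : ({j : Fin m | x ∈ vars j}).ncard < ({j : Fin m | y ∈ vars j}).ncard :=
        Set.ncard_lt_ncard hxy (Set.toFinite _)
      have h2 : ({j : Fin m | y ∈ vars j}).ncard ≤ m := by
        have := Set.ncard_le_ncard (Set.subset_univ {j : Fin m | y ∈ vars j}) (Set.toFinite _)
        simpa [Set.ncard_univ] using this
      have hy : (e y : ℕ) < C := (e y).isLt
      have hx : (e x : ℕ) < C := (e x).isLt
      have h3 : m - ({j : Fin m | y ∈ vars j}).ncard + 1 ≤ m - ({j : Fin m | x ∈ vars j}).ncard := by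
        omega
      calc κ y < C * (m - ({j : Fin m | y ∈ vars j}).ncard) + C := by
              simp only [κ]; omega
        _ = C * (m - ({j : Fin m | y ∈ vars j}).ncard + 1) := by ring
        _ ≤ C * (m - ({j : Fin m | x ∈ vars j}).ncard) := Nat.mul_le_mul_left _ h3
        _ ≤ κ x := Nat.le_add_right _ _
    have hcmp : ∀ (x y : V) (i : Fin m), x ∈ vars i → y ∈ vars i →
        ({j : Fin m | x ∈ vars j} ⊆ {j : Fin m | y ∈ vars j} ∨
         {j : Fin m | y ∈ vars j} ⊆ {j : Fin m | x ∈ vars j}) := by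
      intro x y i hx hy
      rcases H x y with h | h | h
      · exact Or.inl h
      · exact Or.inr h
      · exfalso
        have hmem : i ∈ ({j : Fin m | x ∈ vars j} ∩ {j : Fin m | y ∈ vars j} : Set (Fin m)) :=
          ⟨hx, hy⟩
        rw [h] at hmem
        exact hmem
    exact exists_qtree vars κ hm hV hinj hmono hcmp
  · rintro ⟨T⟩
    -- a variable whose node is a prefix of another variable's node dominates it
    have key : ∀ (a b : V) (va vb : List ℕ), va ∈ T.t → vb ∈ T.t → ¬ IsLeafIn T.t vb →
        T.label va = Sum.inr a → T.label vb = Sum.inr b → va <+: vb →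
        ∀ j : Fin m, b ∈ vars j → a ∈ vars j := by
      intro a b va vb hva hvb hvbnl hla hlb hpre j hbj
      obtain ⟨w, ⟨hw, hwl, hwlab⟩, -⟩ := T.atom_unique j
      obtain ⟨v', hv', hv'ne, hv'pre, hv'lab⟩ := (T.path_vars w hw j hwl hwlab b).1 hbj
      have hv'nl : ¬ IsLeafIn T.t v' := fun hl => hv'ne ((hl w hw hv'pre).symm)
      have hveq : v' = vb := by
        obtain ⟨u, hu, huniq⟩ := T.var_unique b
        rw [huniq v' ⟨hv', hv'nl, hv'lab⟩, huniq vb ⟨hvb, hvbnl, hlb⟩]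
      have hpw : va <+: w := hpre.trans (hveq ▸ hv'pre)
      have hne : va ≠ w := by
        intro h
        rw [h, hwlab] at hla
        cases hla
      exact (T.path_vars w hw j hwl hwlab a).2 ⟨va, hva, hne, hpw, hla⟩
    intro x y
    by_cases hdisj : {i : Fin m | x ∈ vars i} ∩ {i : Fin m | y ∈ vars i} = ∅
    · exact Or.inr (Or.inr hdisj)
    · obtain ⟨i, hix, hiy⟩ : ∃ i : Fin m, x ∈ vars i ∧ y ∈ vars i := by
        rw [Set.eq_empty_iff_forall_notMem] at hdisj
        push_neg at hdisj
        obtain ⟨i, hi⟩ := hdisj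
        exact ⟨i, hi.1, hi.2⟩
      obtain ⟨u, ⟨hu, hul, hulab⟩, -⟩ := T.atom_unique i
      obtain ⟨vx, hvx, hvxne, hvxpre, hvxlab⟩ := (T.path_vars u hu i hul hulab x).1 hix
      obtain ⟨vy, hvy, hvyne, hvypre, hvylab⟩ := (T.path_vars u hu i hul hulab y).1 hiy
      have hvxnl : ¬ IsLeafIn T.t vx := fun hl => hvxne ((hl u hu hvxpre).symm)
      have hvynl : ¬ IsLeafIn T.t vy := fun hl => hvyne ((hl u hu hvypre).symm)
      rcases List.prefix_or_prefix_of_prefix hvxpre hvypre with h | h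
      · exact Or.inr (Or.inl (key x y vx vy hvx hvy hvynl hvxlab hvylab h))
      · exact Or.inl (key y x vy vx hvy hvx hvxnl hvylab hvxlab h)
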